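/- Let f : ℝ^d → ℝ be Lipschitz continuous with constant L_f with respect to the sup norm and SISTr, let ᾱ > 0, r* ∈ ℝ, and let x̄ ∈ ℝ^d satisfy f(x̄) = r*. Let δ₀ > 0 and let y : ℝ → ℝ^d be continuous with ‖y(t) − x̄‖∞ ≤ δ₀ for all t ≥ 0. Let z : ℝ → ℝ be differentiable with z(0) = 0 and ż(t) = ᾱ·(r* − f(y(t) + z(t))) for all t. Then, with δ = (L_f + 1)·δ₀, one has |z(t)| ≤ ε_{x̄,δ} for all t ≥ 0. -/
import Mathlib


/-- `g` is strictly increasing under scalar translation (SISTr) at `x`. -/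
def SISTrAt {d : ℕ} (g : (Fin d → ℝ) → ℝ) (x : Fin d → ℝ) : Prop :=
  StrictMono (fun c : ℝ => g (fun i => x i + c)) ∧
    Function.Surjective (fun c : ℝ => g (fun i => x i + c))

/-- `g` is SISTr if it is SISTr at every point. -/
def SISTr {d : ℕ} (g : (Fin d → ℝ) → ℝ) : Prop :=
  ∀ x : Fin d → ℝ, SISTrAt g x

/-- If `f(x̄) = r*`, `‖y(t) − x̄‖∞ ≤ δ₀` for `t ≥ 0`, `z(0) = 0` and
`ż(t) = ᾱ (r* − f(y(t) + z(t)))`, then `|z(t)| ≤ ε_{x̄,δ}` for all `t ≥ 0`,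
where `δ = (L_f + 1) δ₀` and `ε_{x̄,δ}` is the smallest `ε > 0` with
`min (f(x̄+ε) − f(x̄)) (f(x̄) − f(x̄−ε)) = δ`. -/
theorem statement10 {d : ℕ} (hd : 1 ≤ d) (f : (Fin d → ℝ) → ℝ) (Lf : ℝ)
    (hLip : ∀ x y : Fin d → ℝ, |f x - f y| ≤ Lf * ‖x - y‖)
    (hS : SISTr f) (α rstar : ℝ) (hα : 0 < α)
    (xbar : Fin d → ℝ) (hxbar : f xbar = rstar)
    (δ₀ : ℝ) (hδ₀ : 0 < δ₀)
    (y : ℝ → (Fin d → ℝ)) (hyc : Continuous y)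
    (hy : ∀ t : ℝ, 0 ≤ t → ‖y t - xbar‖ ≤ δ₀)
    (z : ℝ → ℝ) (hz0 : z 0 = 0)
    (hz : ∀ t : ℝ, HasDerivAt z (α * (rstar - f (fun i => y t i + z t))) t)
    (ε : ℝ)
    (hε : IsLeast {e : ℝ | 0 < e ∧
        min (f (fun i => xbar i + e) - f xbar)
          (f xbar - f (fun i => xbar i - e)) = (Lf + 1) * δ₀} ε) :
    ∀ t : ℝ, 0 ≤ t → |z t| ≤ ε := by
  have hεpos : 0 < ε := hε.1.1
  have hmin := hε.1.2
  have h1 : (Lf + 1) * δ₀ ≤ f (fun i => xbar i + ε) - f xbar := by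
    rw [← hmin]; exact min_le_left _ _
  have h2 : (Lf + 1) * δ₀ ≤ f xbar - f (fun i => xbar i - ε) := by
    rw [← hmin]; exact min_le_right _ _
  have hzc : Continuous z := continuous_iff_continuousAt.mpr fun t => (hz t).continuousAt
  haveI : Nonempty (Fin d) := ⟨⟨0, hd⟩⟩
  have hLf0 : 0 ≤ Lf := by
    have h := hLip xbar (fun i => xbar i + ε)
    have hn : (xbar - fun i => xbar i + ε) = (fun _ : Fin d => -ε) := by
      funext i; simp only [Pi.sub_apply]; ring
    rw [hn, pi_norm_const] at h
    have : ‖(-ε)‖ = ε := by rw [norm_neg, Real.norm_eq_abs, abs_of_pos hεpos]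
    rw [this] at h
    nlinarith [abs_nonneg (f xbar - f (fun i => xbar i + ε))]
  -- derivative is negative when z t ≥ ε, positive when z t ≤ -ε
  have hup : ∀ t : ℝ, 0 ≤ t → ε ≤ z t → deriv z t < 0 := by
    intro t ht hzt
    rw [(hz t).deriv]
    have hmono : f (fun i => y t i + ε) ≤ f (fun i => y t i + z t) :=
      (hS (y t)).1.monotone hzt
    have hl := hLip (fun i => xbar i + ε) (fun i => y t i + ε)
    have hn : ((fun i => xbar i + ε) - fun i => y t i + ε) = xbar - y t := by
      funext i; simp only [Pi.sub_apply]; ring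
    rw [hn] at hl
    have hyy : ‖xbar - y t‖ ≤ δ₀ := by rw [norm_sub_rev]; exact hy t ht
    have hb : f (fun i => xbar i + ε) - f (fun i => y t i + ε) ≤ Lf * δ₀ :=
      le_trans (le_trans (le_abs_self _) hl) (mul_le_mul_of_nonneg_left hyy hLf0)
    nlinarith
  have hdown : ∀ t : ℝ, 0 ≤ t → z t ≤ -ε → 0 < deriv z t := by
    intro t ht hzt
    rw [(hz t).deriv]
    have hmono : f (fun i => y t i + z t) ≤ f (fun i => y t i + -ε) :=
      (hS (y t)).1.monotone hzt
    have hl := hLip (fun i => y t i + -ε) (fun i => xbar i - ε)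
    have hn : ((fun i => y t i + -ε) - fun i => xbar i - ε) = y t - xbar := by
      funext i; simp only [Pi.sub_apply]; ring
    rw [hn] at hl
    have hyy : ‖y t - xbar‖ ≤ δ₀ := hy t ht
    have hb : f (fun i => y t i + -ε) - f (fun i => xbar i - ε) ≤ Lf * δ₀ :=
      le_trans (le_trans (le_abs_self _) hl) (mul_le_mul_of_nonneg_left hyy hLf0)
    nlinarith
  intro t₀ ht₀
  rw [abs_le]
  constructor
  · -- lower bound: -ε ≤ z t₀
    by_contra h
    push_neg at h
    set S : Set ℝ := Set.Icc 0 t₀ ∩ z ⁻¹' Set.Ici (-ε) with hSdef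
    have hScpt : IsCompact S := isCompact_Icc.inter_right (isClosed_Ici.preimage hzc)
    have hSne : S.Nonempty := ⟨0, ⟨le_refl 0, ht₀⟩, by simp [hz0]; linarith⟩
    have hsS : sSup S ∈ S := hScpt.sSup_mem hSne
    set s := sSup S
    have hs0 : 0 ≤ s := hsS.1.1
    have hst : s ≤ t₀ := hsS.1.2
    have hzs : -ε ≤ z s := hsS.2
    have hslt : s < t₀ := lt_of_le_of_ne hst (by intro he; rw [he] at hzs; linarith)
    have hgt : ∀ u ∈ Set.Ioo s t₀, z u < -ε := by
      intro u hu
      by_contra hc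
      push_neg at hc
      have huS : u ∈ S := ⟨⟨le_trans hs0 hu.1.le, hu.2.le⟩, hc⟩
      exact absurd (le_csSup hScpt.bddAbove huS) (not_le.mpr hu.1)
    have hmono : StrictMonoOn z (Set.Icc s t₀) := by
      apply strictMonoOn_of_deriv_pos (convex_Icc s t₀) hzc.continuousOn
      intro u hu
      rw [interior_Icc] at hu
      exact hdown u (le_trans hs0 hu.1.le) (hgt u hu).le
    have := hmono ⟨le_refl s, hst⟩ ⟨hst, le_refl t₀⟩ hslt
    linarith
  · -- upper bound: z t₀ ≤ ε
    by_contra h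
    push_neg at h
    set S : Set ℝ := Set.Icc 0 t₀ ∩ z ⁻¹' Set.Iic ε with hSdef
    have hScpt : IsCompact S := isCompact_Icc.inter_right (isClosed_Iic.preimage hzc)
    have hSne : S.Nonempty := ⟨0, ⟨le_refl 0, ht₀⟩, by simp [hz0]; linarith⟩
    have hsS : sSup S ∈ S := hScpt.sSup_mem hSne
    set s := sSup S
    have hs0 : 0 ≤ s := hsS.1.1
    have hst : s ≤ t₀ := hsS.1.2
    have hzs : z s ≤ ε := hsS.2
    have hslt : s < t₀ := lt_of_le_of_ne hst (by intro he; rw [he] at hzs; linarith)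
    have hgt : ∀ u ∈ Set.Ioo s t₀, ε < z u := by
      intro u hu
      by_contra hc
      push_neg at hc
      have huS : u ∈ S := ⟨⟨le_trans hs0 hu.1.le, hu.2.le⟩, hc⟩
      exact absurd (le_csSup hScpt.bddAbove huS) (not_le.mpr hu.1)
    have hanti : StrictAntiOn z (Set.Icc s t₀) := by
      apply strictAntiOn_of_deriv_neg (convex_Icc s t₀) hzc.continuousOn
      intro u hu
      rw [interior_Icc] at hu
      exact hup u (le_trans hs0 hu.1.le) (hgt u hu).le
    have := hanti ⟨le_refl s, hst⟩ ⟨hst, le_refl t₀⟩ hslt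
    linarith
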